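/- arXiv:1210.2995 — 3 statements merged into one kernel-verified Lean document; each statement's English description precedes it below -/
import Mathlib

section
/- The higher topology makes K((t)) into a locally convex topological K-vector space: every set of the form Λ = Σ_{i∈ℤ} 𝔭^{n_i} t^i, where (n_i)_{i∈ℤ} ⊂ ℤ ∪ {-∞} satisfies n_i = -∞ for all sufficiently large i, is an 𝒪-lattice in K((t)), and these sets form a basis of neighbourhoods of zero for the higher topology. -/
/-!
Common setting: `K` is a characteristic-zero local field (a finite extension of `ℚ_p`)
with ring of integers `𝒪 = {c : K | ‖c‖ ≤ 1}`, maximal ideal `𝔭 = {c : K | ‖c‖ < 1}`,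
residue field of cardinality `q` and the absolute value normalised by `‖π‖ = q⁻¹`.
We formalise the two-dimensional local fields `K((t))` (as `LaurentSeries K`) and
`K{{t}}` (as the submodule `mixedCarrier K` of `ℤ → K`), their higher topologies, and
the relevant functional-analytic notions (lattices, seminorms, boundedness,
c-compactness, compactoidness, completeness for nets, duality).
-/

open Filter Topology Set Pointwise
open scoped Classical

noncomputable section

namespace TwoDimLF

variable (K : Type) [NontriviallyNormedField K]

/-- `K` is a characteristic-zero nonarchimedean local field: the norm is nonarchimedean,
takes the values `q^ℤ` on `K˟` (with a uniformizer of norm `q⁻¹`), `K` is complete, locally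
compact, of characteristic zero, and the residue field has exactly `q` elements. -/
structure IsCharZeroLocalField (q : ℕ) : Prop where
  nonarch : ∀ x y : K, ‖x + y‖ ≤ max ‖x‖ ‖y‖
  one_lt_q : 1 < q
  norm_values : ∀ x : K, x ≠ 0 → ∃ n : ℤ, ‖x‖ = (q : ℝ) ^ (-n)
  exists_uniformizer : ∃ π : K, ‖π‖ = ((q : ℝ))⁻¹
  charZero : CharZero K
  locallyCompact : LocallyCompactSpace K
  complete : CompleteSpace K
  residue_card : ∃ s : Finset K, s.card = q ∧
    ∀ x : K, ‖x‖ ≤ 1 → ∃! y, y ∈ s ∧ ‖x - y‖ < 1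

/-- The fractional ideal `𝔭^n ⊆ K` for `n ∈ ℤ ∪ {-∞}`, with the convention `𝔭^(-∞) = K`. -/
def pB (q : ℕ) (n : WithBot ℤ) : Set K :=
  WithBot.recBotCoe Set.univ (fun m : ℤ => {x : K | ‖x‖ ≤ (q : ℝ) ^ (-m)}) n

/-- The fractional ideal `𝔭^n ⊆ K` for `n ∈ ℤ ∪ {∞}`, with the convention `𝔭^∞ = {0}`. -/
def pT (q : ℕ) (n : WithTop ℤ) : Set K :=
  WithTop.recTopCoe {0} (fun m : ℤ => {x : K | ‖x‖ ≤ (q : ℝ) ^ (-m)}) n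

/-- The fractional ideal `𝔭^n ⊆ K` for `n ∈ ℤ ∪ {±∞}`. -/
def pE (q : ℕ) (n : WithBot (WithTop ℤ)) : Set K :=
  WithBot.recBotCoe Set.univ (fun m : WithTop ℤ => pT K q m) n

/-- `q ^ n ∈ ℝ` for `n ∈ ℤ ∪ {-∞}`, with the convention `q^(-∞) = 0`. -/
def qpow (q : ℕ) (n : WithBot ℤ) : ℝ :=
  WithBot.recBotCoe 0 (fun m : ℤ => (q : ℝ) ^ m) n

/-- `1 - k` for `k ∈ ℤ ∪ {±∞}` (so `1 - (±∞) = ∓∞`). -/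
def oneSubE : WithBot (WithTop ℤ) → WithBot (WithTop ℤ) :=
  WithBot.recBotCoe ((⊤ : WithTop ℤ) : WithBot (WithTop ℤ))
    (WithTop.recTopCoe (⊥ : WithBot (WithTop ℤ))
      (fun z : ℤ => (((1 - z : ℤ) : WithTop ℤ) : WithBot (WithTop ℤ))))

section LCS

variable {V : Type} [AddCommGroup V] [Module K V]

/-- `S` is an `𝒪`-submodule of the `K`-vector space `V`, where `𝒪 = {c : K | ‖c‖ ≤ 1}`
is the ring of integers of `K`. -/
def IsOSubmodule (S : Set V) : Prop :=
  (0 : V) ∈ S ∧ (∀ x ∈ S, ∀ y ∈ S, x + y ∈ S) ∧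
    ∀ c : K, ‖c‖ ≤ 1 → ∀ x ∈ S, c • x ∈ S

/-- `S` is an `𝒪`-lattice in `V`: an `𝒪`-submodule such that every vector is carried
into `S` by some nonzero scalar. -/
def IsLatticeSet (S : Set V) : Prop :=
  IsOSubmodule K S ∧ ∀ v : V, ∃ a : K, a ≠ 0 ∧ a • v ∈ S

/-- A (nonarchimedean) seminorm on the `K`-vector space `V`. -/
def IsSeminorm (N : V → ℝ) : Prop :=
  (∀ (c : K) (v : V), N (c • v) = ‖c‖ * N v) ∧ ∀ v w : V, N (v + w) ≤ max (N v) (N w)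

/-- The gauge seminorm of a lattice `Λ ⊆ V`: `‖v‖_Λ = inf {‖a‖ : v ∈ aΛ}`. -/
def gaugeSeminorm (Λ : Set V) (v : V) : ℝ :=
  sInf {r : ℝ | ∃ a : K, v ∈ a • Λ ∧ r = ‖a‖}

/-- The group topology on `W` determined by a family `B` of neighbourhoods of zero:
neighbourhoods of `x` are generated by the translates `x + U`, `U ∈ B`. -/
def addTopologyOf {W : Type} [AddCommGroup W] (B : Set (Set W)) : TopologicalSpace W :=
  TopologicalSpace.mkOfNhds fun x => Filter.map (fun v => x + v) (⨅ U ∈ B, Filter.principal U)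

/-- `B` is (Von-Neumann) bounded for the locally convex topology `τ`: every open lattice
absorbs it. -/
def IsVNBounded (τ : TopologicalSpace V) (B : Set V) : Prop :=
  ∀ Λ : Set V, IsLatticeSet K Λ → IsOpen[τ] Λ → ∃ a : K, B ⊆ a • Λ

/-- The `𝒪`-submodule `A ⊆ V` is c-compact: for every decreasing filtered family of open
lattices `L i`, the canonical map `A → lim A/(L i ∩ A)` is surjective (phrased via
compatible families of representatives). -/
def IsCCompact (τ : TopologicalSpace V) (A : Set V) : Prop :=
  ∀ (ι : Type) (L : ι → Set V),
    (∀ i, IsLatticeSet K (L i) ∧ IsOpen[τ] (L i)) →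
    (∀ i j, ∃ k, L k ⊆ L i ∧ L k ⊆ L j) →
    ∀ x : ι → V, (∀ i, x i ∈ A) →
      (∀ i j, L j ⊆ L i → x j - x i ∈ L i) →
      ∃ a ∈ A, ∀ i, a - x i ∈ L i

/-- The `𝒪`-submodule `A ⊆ V` is compactoid: for every open lattice `Λ` there are finitely
many vectors `v₁, …, v_m ∈ V` with `A ⊆ Λ + 𝒪v₁ + ⋯ + 𝒪v_m`. -/
def IsCompactoid (τ : TopologicalSpace V) (A : Set V) : Prop :=
  ∀ Λ : Set V, IsLatticeSet K Λ → IsOpen[τ] Λ →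
    ∃ (m : ℕ) (v : Fin m → V),
      A ⊆ {u : V | ∃ l ∈ Λ, ∃ c : Fin m → K, (∀ j, ‖c j‖ ≤ 1) ∧ u = l + ∑ j, c j • v j}

/-- `A ⊆ V` is complete: every Cauchy net with values in `A` converges to a point of `A`
(for the topology `τ`). -/
def IsNetComplete (τ : TopologicalSpace V) (A : Set V) : Prop :=
  ∀ (ι : Type) [Preorder ι] [Nonempty ι],
    (∀ i j : ι, ∃ k, i ≤ k ∧ j ≤ k) →
    ∀ x : ι → V, (∀ i, x i ∈ A) →
      (∀ U ∈ @nhds V τ 0, ∃ i0, ∀ j ≥ i0, ∀ k ≥ i0, x j - x k ∈ U) →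
      ∃ a ∈ A, Filter.Tendsto x Filter.atTop (@nhds V τ a)

/-- `τ` makes `V` a locally convex topological `K`-vector space: it is a vector-space
topology whose filter of neighbourhoods of zero admits a basis of lattices. -/
def IsLCTVS (τ : TopologicalSpace V) : Prop :=
  @IsTopologicalAddGroup V τ _ ∧ @ContinuousSMul K V _ _ τ ∧
    ∀ S ∈ @nhds V τ 0, ∃ Λ : Set V, IsLatticeSet K Λ ∧ Λ ∈ @nhds V τ 0 ∧ Λ ⊆ S

/-- The topological dual of `(V, τ)`: continuous `K`-linear forms, as a set of functions. -/
def dualSet (τ : TopologicalSpace V) : Set (V → K) :=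
  {l | IsLinearMap K l ∧ @Continuous V K τ _ l}

/-- Basic neighbourhoods of zero for the `c`-topology on `V → K`: uniform convergence on
compactoid `𝒪`-submodules. -/
def cTopBasic (τ : TopologicalSpace V) : Set (Set (V → K)) :=
  {S | ∃ (B : Set V) (ε : ℝ), IsOSubmodule K B ∧ IsCompactoid K τ B ∧ 0 < ε ∧
    S = {l : V → K | ∀ x ∈ B, ‖l x‖ ≤ ε}}

/-- The `c`-topology (uniform convergence on compactoid `𝒪`-submodules) on `V → K`. -/
def cTop (τ : TopologicalSpace V) : TopologicalSpace (V → K) :=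
  addTopologyOf (cTopBasic K τ)

/-- The pseudo-polar `A^p = {l ∈ V' : |l(v)| < 1 for all v ∈ A}`. -/
def pseudoPolar (τ : TopologicalSpace V) (A : Set V) : Set (V → K) :=
  {l | l ∈ dualSet K τ ∧ ∀ v ∈ A, ‖l v‖ < 1}

/-- The pseudo-bipolar `A^{pp} = {v ∈ V : |l(v)| < 1 for all l ∈ A^p}`. -/
def pseudoBipolar (τ : TopologicalSpace V) (A : Set V) : Set V :=
  {v | ∀ l ∈ pseudoPolar K τ A, ‖l v‖ < 1}

end LCS

/-! ### The equal characteristic field `K((t))` -/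

/-- Basic neighbourhoods of zero for the higher topology on `K((t))`:
`Σ U_i t^i` where each `U_i` is an open neighbourhood of `0` in `K` and `U_i = K` for all
sufficiently large `i`. -/
def laurentBasic : Set (Set (LaurentSeries K)) :=
  {S | ∃ U : ℤ → Set K, (∀ i, IsOpen (U i) ∧ (0 : K) ∈ U i) ∧
    (∃ N : ℤ, ∀ i, N ≤ i → U i = Set.univ) ∧
    S = {f : LaurentSeries K | ∀ i, f.coeff i ∈ U i}}

/-- The higher topology on `K((t))`. -/
def laurentTop : TopologicalSpace (LaurentSeries K) := addTopologyOf (laurentBasic K)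

/-- `Λ = Σ_{i∈ℤ} 𝔭^{n_i} t^i ⊆ K((t))` for a sequence `(n_i) ⊆ ℤ ∪ {-∞}`. -/
def laurentLambda (q : ℕ) (n : ℤ → WithBot ℤ) : Set (LaurentSeries K) :=
  {f | ∀ i, f.coeff i ∈ pB K q (n i)}

/-- `B = Σ_{i∈ℤ} 𝔭^{k_i} t^i ⊆ K((t))` for a sequence `(k_i) ⊆ ℤ ∪ {∞}`. -/
def laurentPT (q : ℕ) (k : ℤ → WithTop ℤ) : Set (LaurentSeries K) :=
  {f | ∀ i, f.coeff i ∈ pT K q (k i)}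

/-- `A = Σ_{i∈ℤ} 𝔭^{k_i} t^i ⊆ K((t))` for a sequence `(k_i) ⊆ ℤ ∪ {±∞}`. -/
def laurentPE (q : ℕ) (k : ℤ → WithBot (WithTop ℤ)) : Set (LaurentSeries K) :=
  {f | ∀ i, f.coeff i ∈ pE K q (k i)}

/-- The admissible seminorm `‖Σ x_i t^i‖ = max_i ‖x_i‖ q^{n_i}` on `K((t))`. -/
def laurentSeminorm (q : ℕ) (n : ℤ → WithBot ℤ) (f : LaurentSeries K) : ℝ :=
  sSup {r : ℝ | ∃ i : ℤ, r = ‖f.coeff i‖ * qpow q (n i)}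

/-- The ring of integers `K[[t]] ⊆ K((t))`. -/
def laurentIntegers : Set (LaurentSeries K) := {f | ∀ i, i < 0 → f.coeff i = 0}

/-- The rank-two ring of integers `𝒪 + tK[[t]] ⊆ K((t))`. -/
def laurentRankTwo : Set (LaurentSeries K) :=
  {f | (∀ i, i < 0 → f.coeff i = 0) ∧ ‖f.coeff 0‖ ≤ 1}

/-- The pairing `γ(x)(y) = π₀(xy) = Σ_i x_i y_{-i}` on `K((t))`. -/
def laurentPairing (x y : LaurentSeries K) : K := ∑' i : ℤ, x.coeff i * y.coeff (-i)

/-! ### The mixed characteristic field `K{{t}}` -/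

/-- The underlying `K`-vector space of `K{{t}}`: functions `x : ℤ → K` (coefficients of
`Σ x_i t^i`) with `inf_i v_K(x_i) > -∞` (i.e. bounded norms) and `x_i → 0` as `i → -∞`. -/
def mixedCarrier : Submodule K (ℤ → K) where
  carrier := {x | (∃ C : ℝ, ∀ i, ‖x i‖ ≤ C) ∧ Filter.Tendsto x Filter.atBot (nhds (0 : K))}
  zero_mem' := ⟨⟨0, fun i => by simp⟩, tendsto_const_nhds⟩
  add_mem' := by
    rintro x y ⟨⟨C, hC⟩, hx⟩ ⟨⟨D, hD⟩, hy⟩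
    refine ⟨⟨C + D, fun i => (norm_add_le _ _).trans (add_le_add (hC i) (hD i))⟩, ?_⟩
    have h := hx.add hy
    rw [add_zero] at h
    exact h
  smul_mem' := by
    rintro c x ⟨⟨C, hC⟩, hx⟩
    refine ⟨⟨‖c‖ * C, fun i => ?_⟩, ?_⟩
    · have h : ‖(c • x) i‖ = ‖c‖ * ‖x i‖ := by simp [norm_smul]
      rw [h]
      exact mul_le_mul_of_nonneg_left (hC i) (norm_nonneg c)
    · have h := hx.const_smul c
      rw [smul_zero] at h
      exact h

/-- The field `K{{t}}`, as a `K`-vector space. -/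
abbrev Mt := ↥(mixedCarrier K)

/-- Basic neighbourhoods of zero for the higher topology on `K{{t}}`:
`Σ V_i t^i` where each `V_i` is an open neighbourhood of `0` in `K`, some `𝔭^c` is
contained in every `V_i`, and for every `l` eventually `𝔭^l ⊆ V_i`. -/
def mixedBasic (q : ℕ) : Set (Set (Mt K)) :=
  {S | ∃ Vs : ℤ → Set K, (∀ i, IsOpen (Vs i) ∧ (0 : K) ∈ Vs i) ∧
    (∃ c : ℤ, ∀ i, {x : K | ‖x‖ ≤ (q : ℝ) ^ (-c)} ⊆ Vs i) ∧
    (∀ l : ℤ, ∃ i0 : ℤ, ∀ i, i0 ≤ i → {x : K | ‖x‖ ≤ (q : ℝ) ^ (-l)} ⊆ Vs i) ∧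
    S = {f : Mt K | ∀ i, f.1 i ∈ Vs i}}

/-- The higher topology on `K{{t}}`. -/
def mixedTop (q : ℕ) : TopologicalSpace (Mt K) := addTopologyOf (mixedBasic K q)

/-- `Λ = Σ_{i∈ℤ} 𝔭^{n_i} t^i ⊆ K{{t}}` for a sequence `(n_i) ⊆ ℤ ∪ {-∞}`. -/
def mixedLambda (q : ℕ) (n : ℤ → WithBot ℤ) : Set (Mt K) :=
  {f | ∀ i, f.1 i ∈ pB K q (n i)}

/-- `B = Σ_{i∈ℤ} 𝔭^{k_i} t^i ⊆ K{{t}}` for a sequence `(k_i) ⊆ ℤ ∪ {∞}`. -/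
def mixedPT (q : ℕ) (k : ℤ → WithTop ℤ) : Set (Mt K) :=
  {f | ∀ i, f.1 i ∈ pT K q (k i)}

/-- `A = Σ_{i∈ℤ} 𝔭^{k_i} t^i ⊆ K{{t}}` for a sequence `(k_i) ⊆ ℤ ∪ {±∞}`. -/
def mixedPE (q : ℕ) (k : ℤ → WithBot (WithTop ℤ)) : Set (Mt K) :=
  {f | ∀ i, f.1 i ∈ pE K q (k i)}

/-- The admissible seminorm `‖Σ x_i t^i‖ = sup_i ‖x_i‖ q^{n_i}` on `K{{t}}`. -/
def mixedSeminorm (q : ℕ) (n : ℤ → WithBot ℤ) (f : Mt K) : ℝ :=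
  sSup {r : ℝ | ∃ i : ℤ, r = ‖f.1 i‖ * qpow q (n i)}

/-- The ring of integers `𝒪{{t}} ⊆ K{{t}}`. -/
def mixedIntegers : Set (Mt K) := {f | ∀ i, ‖f.1 i‖ ≤ 1}

/-- The rank-two ring of integers `Σ_{i<0} 𝔭 t^i + Σ_{i≥0} 𝒪 t^i ⊆ K{{t}}`. -/
def mixedRankTwo (q : ℕ) : Set (Mt K) :=
  {f | (∀ i : ℤ, i < 0 → ‖f.1 i‖ ≤ ((q : ℝ))⁻¹) ∧ ∀ i : ℤ, 0 ≤ i → ‖f.1 i‖ ≤ 1}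

/-- The monomial `t^i ∈ K{{t}}`. -/
def mixedT (i : ℤ) : Mt K :=
  ⟨fun j => if j = i then 1 else 0,
    ⟨⟨1, fun j => by by_cases h : j = i <;> simp [h]⟩, by
      refine (tendsto_const_nhds : Filter.Tendsto (fun _ : ℤ => (0 : K))
        Filter.atBot (nhds 0)).congr' ?_
      filter_upwards [Filter.eventually_le_atBot (i - 1)] with j hj
      have h : j ≠ i := by omega
      simp [h]⟩⟩

/-- Coefficients of the product of two elements of `K{{t}}` (Cauchy product). -/
def mixedMulCoeff (x y : Mt K) : ℤ → K := fun k => ∑' i : ℤ, x.1 i * y.1 (k - i)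

/-- Multiplication on `K{{t}}`. -/
def mixedMul (x y : Mt K) : Mt K :=
  if h : mixedMulCoeff K x y ∈ mixedCarrier K then ⟨_, h⟩ else 0

/-- The pairing `γ(x)(y) = π₀(xy) = Σ_i x_i y_{-i}` on `K{{t}}`. -/
def mixedPairing (x y : Mt K) : K := ∑' i : ℤ, x.1 i * y.1 (-i)



/-! ### Auxiliary lemmas for Statement 0 -/

section Statement0Aux

variable {K : Type} [NontriviallyNormedField K] {q : ℕ}

lemma s0_hq1 (hK : IsCharZeroLocalField K q) : (1 : ℝ) < q := by
  exact_mod_cast hK.one_lt_q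

lemma s0_hq0 (hK : IsCharZeroLocalField K q) : (0 : ℝ) < q :=
  lt_trans zero_lt_one (s0_hq1 hK)

lemma pB_bot : pB K q ⊥ = Set.univ := rfl

lemma pB_coe (m : ℤ) : pB K q (m : WithBot ℤ) = {x : K | ‖x‖ ≤ (q : ℝ) ^ (-m)} := rfl

lemma pB_zero_mem (hK : IsCharZeroLocalField K q) (n : WithBot ℤ) : (0 : K) ∈ pB K q n := by
  induction n using WithBot.recBotCoe with
  | bot => trivial
  | coe m =>
    rw [pB_coe]
    simp only [Set.mem_setOf_eq, norm_zero]
    positivity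

lemma pB_add (hK : IsCharZeroLocalField K q) {n : WithBot ℤ} {x y : K}
    (hx : x ∈ pB K q n) (hy : y ∈ pB K q n) : x + y ∈ pB K q n := by
  induction n using WithBot.recBotCoe with
  | bot => trivial
  | coe m => exact le_trans (hK.nonarch x y) (max_le hx hy)

lemma pB_smul {n : WithBot ℤ} {c x : K} (hc : ‖c‖ ≤ 1) (hx : x ∈ pB K q n) :
    c • x ∈ pB K q n := by
  induction n using WithBot.recBotCoe with
  | bot => trivial
  | coe m =>
    show ‖c • x‖ ≤ (q : ℝ) ^ (-m)
    rw [smul_eq_mul, norm_mul]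
    calc ‖c‖ * ‖x‖ ≤ 1 * ((q : ℝ) ^ (-m)) :=
          mul_le_mul hc hx (norm_nonneg _) zero_le_one
      _ = (q : ℝ) ^ (-m) := one_mul _

lemma pB_neg {n : WithBot ℤ} {x : K} (hx : x ∈ pB K q n) : -x ∈ pB K q n := by
  induction n using WithBot.recBotCoe with
  | bot => trivial
  | coe m => show ‖-x‖ ≤ _; rwa [norm_neg]

lemma isOpen_pB (hK : IsCharZeroLocalField K q) (n : WithBot ℤ) : IsOpen (pB K q n) := by
  induction n using WithBot.recBotCoe with
  | bot => exact isOpen_univ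
  | coe m =>
    have h : pB K q (m : WithBot ℤ) = Metric.ball (0 : K) ((q : ℝ) ^ (-m + 1)) := by
      ext x
      rw [pB_coe, Metric.mem_ball, dist_zero_right]
      constructor
      · intro h
        exact lt_of_le_of_lt h (zpow_lt_zpow_right₀ (s0_hq1 hK) (by omega))
      · intro h
        by_cases hx : x = 0
        · simp only [Set.mem_setOf_eq, hx, norm_zero]
          positivity
        · obtain ⟨j, hj⟩ := hK.norm_values x hx
          simp only [Set.mem_setOf_eq]
          rw [hj] at h ⊢
          have : -j < -m + 1 := (zpow_lt_zpow_iff_right₀ (s0_hq1 hK)).mp h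
          exact zpow_le_zpow_right₀ (s0_hq1 hK).le (by omega)
    rw [h]
    exact Metric.isOpen_ball

/-- The sequences of exponents appearing in the statement: `n i = -∞` for large `i`. -/
def GoodSeq (n : ℤ → WithBot ℤ) : Prop := ∃ k : ℤ, ∀ i : ℤ, k < i → n i = ⊥

lemma lambda_mem_iff {n : ℤ → WithBot ℤ} {f : LaurentSeries K} :
    f ∈ laurentLambda K q n ↔ ∀ i, f.coeff i ∈ pB K q (n i) := Iff.rfl

lemma lambda_zero_mem (hK : IsCharZeroLocalField K q) (n : ℤ → WithBot ℤ) :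
    (0 : LaurentSeries K) ∈ laurentLambda K q n := by
  intro i
  simpa using pB_zero_mem hK (n i)

lemma lambda_add (hK : IsCharZeroLocalField K q) {n : ℤ → WithBot ℤ}
    {f g : LaurentSeries K} (hf : f ∈ laurentLambda K q n) (hg : g ∈ laurentLambda K q n) :
    f + g ∈ laurentLambda K q n := by
  intro i
  rw [HahnSeries.coeff_add]
  exact pB_add hK (hf i) (hg i)

lemma lambda_smul {n : ℤ → WithBot ℤ} {c : K} (hc : ‖c‖ ≤ 1)
    {f : LaurentSeries K} (hf : f ∈ laurentLambda K q n) :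
    c • f ∈ laurentLambda K q n := by
  intro i
  rw [HahnSeries.coeff_smul]
  exact pB_smul hc (hf i)

lemma lambda_neg (hK : IsCharZeroLocalField K q) {n : ℤ → WithBot ℤ}
    {f : LaurentSeries K} (hf : f ∈ laurentLambda K q n) :
    -f ∈ laurentLambda K q n := by
  intro i
  rw [HahnSeries.coeff_neg]
  exact pB_neg (hf i)

lemma lambda_sub (hK : IsCharZeroLocalField K q) {n : ℤ → WithBot ℤ}
    {f g : LaurentSeries K} (hf : f ∈ laurentLambda K q n) (hg : g ∈ laurentLambda K q n) :
    f - g ∈ laurentLambda K q n := by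
  rw [sub_eq_add_neg]
  exact lambda_add hK hf (lambda_neg hK hg)

lemma uniformizer_ne_zero (hK : IsCharZeroLocalField K q) {π : K}
    (hπ : ‖π‖ = ((q : ℝ))⁻¹) : π ≠ 0 := by
  intro h
  rw [h, norm_zero] at hπ
  have : (0 : ℝ) < (q : ℝ)⁻¹ := by
    have := s0_hq0 hK; positivity
  rw [← hπ] at this
  exact lt_irrefl _ this

lemma isLattice_lambda (hK : IsCharZeroLocalField K q) {n : ℤ → WithBot ℤ}
    (hn : GoodSeq n) : IsLatticeSet K (laurentLambda K q n) := by
  obtain ⟨k, hk⟩ := hn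
  obtain ⟨π, hπ⟩ := hK.exists_uniformizer
  have hπ0 : π ≠ 0 := uniformizer_ne_zero hK hπ
  refine ⟨⟨lambda_zero_mem hK n, fun x hx y hy => lambda_add hK hx hy,
      fun c hc x hx => lambda_smul hc hx⟩, ?_⟩
  intro f
  by_cases hf : f = 0
  · exact ⟨1, one_ne_zero, by rw [hf, smul_zero]; exact lambda_zero_mem hK n⟩
  have key : ∀ i : ℤ, ∃ M₀ : ℕ, ∀ M : ℕ, M₀ ≤ M → π ^ M * f.coeff i ∈ pB K q (n i) := by
    intro i
    cases hni : n i with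
    | bot => exact ⟨0, fun M _ => trivial⟩
    | coe j =>
      obtain ⟨M₀, hM₀⟩ := pow_unbounded_of_one_lt (‖f.coeff i‖ * (q : ℝ) ^ j) (s0_hq1 hK)
      refine ⟨M₀, fun M hM => ?_⟩
      show ‖π ^ M * f.coeff i‖ ≤ (q : ℝ) ^ (-j)
      rw [norm_mul, norm_pow, hπ, inv_pow]
      have hqM : (0 : ℝ) < (q : ℝ) ^ M := by have := s0_hq0 hK; positivity
      rw [inv_mul_le_iff₀ hqM]
      have h1 : ‖f.coeff i‖ * (q : ℝ) ^ j ≤ (q : ℝ) ^ M :=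
        le_trans hM₀.le (pow_le_pow_right₀ (s0_hq1 hK).le hM)
      have hqj : (0 : ℝ) < (q : ℝ) ^ j := by have := s0_hq0 hK; positivity
      rw [zpow_neg, ← div_eq_mul_inv]
      exact (le_div_iff₀ hqj).mpr h1
  choose g hg using key
  set M := (Finset.Icc f.order k).sup g with hM
  refine ⟨π ^ M, pow_ne_zero _ hπ0, ?_⟩
  intro i
  rw [HahnSeries.coeff_smul, smul_eq_mul]
  by_cases hik : k < i
  · rw [hk i hik]; trivial
  · by_cases hio : i < f.order
    · rw [HahnSeries.coeff_eq_zero_of_lt_order hio, mul_zero]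
      exact pB_zero_mem hK _
    · exact hg i M (Finset.le_sup (Finset.mem_Icc.mpr ⟨by omega, by omega⟩))

/-- The filter of basic neighbourhoods of zero of the higher topology. -/
def laurentF (K : Type) [NontriviallyNormedField K] : Filter (LaurentSeries K) :=
  ⨅ U ∈ laurentBasic K, Filter.principal U

lemma univ_mem_basic : (Set.univ : Set (LaurentSeries K)) ∈ laurentBasic K := by
  refine ⟨fun _ => Set.univ, fun i => ⟨isOpen_univ, Set.mem_univ _⟩,
    ⟨0, fun _ _ => rfl⟩, ?_⟩
  ext f; simp

lemma basic_inter {S T : Set (LaurentSeries K)} (hS : S ∈ laurentBasic K)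
    (hT : T ∈ laurentBasic K) : S ∩ T ∈ laurentBasic K := by
  obtain ⟨U, hU, ⟨N, hN⟩, rfl⟩ := hS
  obtain ⟨V, hV, ⟨N', hN'⟩, rfl⟩ := hT
  refine ⟨fun i => U i ∩ V i,
    fun i => ⟨(hU i).1.inter (hV i).1, ⟨(hU i).2, (hV i).2⟩⟩,
    ⟨max N N', fun i hi => by
      show U i ∩ V i = Set.univ
      rw [hN i (le_trans (le_max_left _ _) hi), hN' i (le_trans (le_max_right _ _) hi)]
      simp⟩, ?_⟩
  ext f
  simp only [Set.mem_inter_iff, Set.mem_setOf_eq]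
  exact forall_and.symm

lemma zero_mem_basic {S : Set (LaurentSeries K)} (hS : S ∈ laurentBasic K) :
    (0 : LaurentSeries K) ∈ S := by
  obtain ⟨U, hU, _, rfl⟩ := hS
  intro i
  simpa using (hU i).2

lemma mem_laurentF {S : Set (LaurentSeries K)} :
    S ∈ laurentF K ↔ ∃ U ∈ laurentBasic K, U ⊆ S := by
  rw [laurentF, mem_biInf_of_directed ?_ ⟨Set.univ, univ_mem_basic⟩]
  · simp only [Filter.mem_principal]
  · rintro U hU V hV
    exact ⟨U ∩ V, basic_inter hU hV,
      Filter.principal_mono.mpr Set.inter_subset_left,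
      Filter.principal_mono.mpr Set.inter_subset_right⟩

lemma lambda_mem_basic (hK : IsCharZeroLocalField K q) {n : ℤ → WithBot ℤ}
    (hn : GoodSeq n) : laurentLambda K q n ∈ laurentBasic K := by
  obtain ⟨k, hk⟩ := hn
  exact ⟨fun i => pB K q (n i), fun i => ⟨isOpen_pB hK _, pB_zero_mem hK _⟩,
    ⟨k + 1, fun i hi => by show pB K q (n i) = Set.univ; rw [hk i (by omega)]; rfl⟩, rfl⟩

lemma lambda_mem_laurentF (hK : IsCharZeroLocalField K q) {n : ℤ → WithBot ℤ}
    (hn : GoodSeq n) : laurentLambda K q n ∈ laurentF K :=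
  mem_laurentF.mpr ⟨_, lambda_mem_basic hK hn, subset_rfl⟩

lemma basic_contains_lambda (hK : IsCharZeroLocalField K q) {S : Set (LaurentSeries K)}
    (hS : S ∈ laurentBasic K) :
    ∃ n : ℤ → WithBot ℤ, GoodSeq n ∧ laurentLambda K q n ⊆ S := by
  obtain ⟨U, hU, ⟨N, hN⟩, rfl⟩ := hS
  have key : ∀ i : ℤ, ∃ m : ℤ, {x : K | ‖x‖ ≤ (q : ℝ) ^ (-m)} ⊆ U i := by
    intro i
    obtain ⟨ε, hε, hball⟩ := Metric.isOpen_iff.mp (hU i).1 0 (hU i).2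
    obtain ⟨M, hM⟩ := pow_unbounded_of_one_lt ε⁻¹ (s0_hq1 hK)
    refine ⟨(M : ℤ), fun x hx => hball ?_⟩
    rw [Metric.mem_ball, dist_zero_right]
    refine lt_of_le_of_lt hx ?_
    have hq0 := s0_hq0 hK
    have hqM : (0 : ℝ) < (q : ℝ) ^ (M : ℤ) := by positivity
    rw [zpow_neg, inv_lt_comm₀ hqM hε]
    rwa [zpow_natCast]
  choose m hm using key
  refine ⟨fun i => if N ≤ i then ⊥ else ((m i : ℤ) : WithBot ℤ),
    ⟨N, fun i hi => if_pos (by omega)⟩, ?_⟩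
  intro f hf i
  by_cases hi : N ≤ i
  · rw [hN i hi]; trivial
  · have h := hf i
    simp only [if_neg hi] at h
    exact hm i h

lemma mem_laurentF_lambda (hK : IsCharZeroLocalField K q) {S : Set (LaurentSeries K)} :
    S ∈ laurentF K ↔ ∃ n : ℤ → WithBot ℤ, GoodSeq n ∧ laurentLambda K q n ⊆ S := by
  rw [mem_laurentF]
  constructor
  · rintro ⟨U, hU, hUS⟩
    obtain ⟨n, hn, hsub⟩ := basic_contains_lambda hK hU
    exact ⟨n, hn, hsub.trans hUS⟩
  · rintro ⟨n, hn, hsub⟩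
    exact ⟨_, lambda_mem_basic hK hn, hsub⟩

lemma laurent_nhds (hK : IsCharZeroLocalField K q) (x : LaurentSeries K) :
    @nhds _ (laurentTop K) x = Filter.map (fun v => x + v) (laurentF K) := by
  refine TopologicalSpace.nhds_mkOfNhds _ x ?_ ?_
  · intro a s hs
    rw [Filter.mem_map] at hs
    obtain ⟨U, hU, hsub⟩ := mem_laurentF.mp hs
    have := hsub (zero_mem_basic hU)
    simpa using this
  · intro a s hs
    rw [Filter.mem_map] at hs
    obtain ⟨n, hn, hsub⟩ := (mem_laurentF_lambda hK).mp hs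
    rw [Filter.eventually_map]
    filter_upwards [lambda_mem_laurentF hK hn] with v hv
    rw [Filter.mem_map]
    refine Filter.mem_of_superset (lambda_mem_laurentF hK hn) ?_
    intro w hw
    have : v + w ∈ laurentLambda K q n := lambda_add hK hv hw
    have h2 := hsub this
    simp only [Set.mem_preimage] at h2 ⊢
    rwa [add_assoc]

lemma mem_nhds_iff_lambda (hK : IsCharZeroLocalField K q) {S : Set (LaurentSeries K)}
    {x : LaurentSeries K} :
    S ∈ @nhds _ (laurentTop K) x ↔
      ∃ n : ℤ → WithBot ℤ, GoodSeq n ∧ ∀ f ∈ laurentLambda K q n, x + f ∈ S := by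
  rw [laurent_nhds hK, Filter.mem_map, mem_laurentF_lambda hK]
  constructor
  · rintro ⟨n, hn, hsub⟩
    exact ⟨n, hn, fun f hf => hsub hf⟩
  · rintro ⟨n, hn, h⟩
    exact ⟨n, hn, fun f hf => h f hf⟩

lemma sub_lambda_mem_nhds (hK : IsCharZeroLocalField K q) {n : ℤ → WithBot ℤ}
    (hn : GoodSeq n) (x : LaurentSeries K) :
    {y : LaurentSeries K | y - x ∈ laurentLambda K q n} ∈ @nhds _ (laurentTop K) x := by
  rw [mem_nhds_iff_lambda hK]
  refine ⟨n, hn, fun f hf => ?_⟩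
  simp only [Set.mem_setOf_eq, add_sub_cancel_left]
  exact hf

end Statement0Aux

/-- The higher topology makes `K((t))` into a locally convex topological
`K`-vector space: every set `Λ = Σ_{i∈ℤ} 𝔭^{n_i} t^i`, where `(n_i) ⊆ ℤ ∪ {-∞}` satisfies
`n_i = -∞` for all sufficiently large `i`, is an `𝒪`-lattice in `K((t))`, and these sets form
a basis of neighbourhoods of zero for the higher topology. -/
theorem statement0 (q : ℕ) (hK : IsCharZeroLocalField K q) :
    IsLCTVS K (laurentTop K) ∧
    (∀ n : ℤ → WithBot ℤ, (∃ k : ℤ, ∀ i : ℤ, k < i → n i = ⊥) →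
      IsLatticeSet K (laurentLambda K q n)) ∧
    (∀ S : Set (LaurentSeries K),
      S ∈ @nhds _ (laurentTop K) 0 ↔
        ∃ n : ℤ → WithBot ℤ, (∃ k : ℤ, ∀ i : ℤ, k < i → n i = ⊥) ∧
          laurentLambda K q n ⊆ S) := by
  classical
  obtain ⟨π, hπ⟩ := hK.exists_uniformizer
  letI := laurentTop K
  have hmem : ∀ (S : Set (LaurentSeries K)),
      S ∈ @nhds _ (laurentTop K) 0 ↔
        ∃ n : ℤ → WithBot ℤ, (∃ k : ℤ, ∀ i : ℤ, k < i → n i = ⊥) ∧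
          laurentLambda K q n ⊆ S := by
    intro S
    rw [mem_nhds_iff_lambda hK]
    constructor
    · rintro ⟨n, hn, h⟩
      exact ⟨n, hn, fun f hf => by simpa using h f hf⟩
    · rintro ⟨n, hn, h⟩
      exact ⟨n, hn, fun f hf => by simpa using h hf⟩
  have hca : @ContinuousAdd (LaurentSeries K) (laurentTop K) _ := by
    constructor
    rw [continuous_iff_continuousAt]
    rintro ⟨a, b⟩
    rw [ContinuousAt, nhds_prod_eq]
    intro s hs
    obtain ⟨n, hn, hsub⟩ := (mem_nhds_iff_lambda hK).mp hs
    rw [Filter.mem_map, Filter.mem_prod_iff]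
    refine ⟨{y | y - a ∈ laurentLambda K q n}, sub_lambda_mem_nhds hK hn a,
      {y | y - b ∈ laurentLambda K q n}, sub_lambda_mem_nhds hK hn b, ?_⟩
    rintro ⟨y, z⟩ ⟨hy, hz⟩
    have hmem2 : (y - a) + (z - b) ∈ laurentLambda K q n := lambda_add hK hy hz
    have h2 := hsub _ hmem2
    have heq : (a + b) + ((y - a) + (z - b)) = y + z := by ring
    rw [heq] at h2
    exact h2
  have hcn : @ContinuousNeg (LaurentSeries K) (laurentTop K) _ := by
    constructor
    rw [continuous_iff_continuousAt]
    intro a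
    rw [ContinuousAt]
    intro s hs
    obtain ⟨n, hn, hsub⟩ := (mem_nhds_iff_lambda hK).mp hs
    rw [Filter.mem_map]
    refine Filter.mem_of_superset (sub_lambda_mem_nhds hK hn a) ?_
    intro y hy
    have hmem2 : -(y - a) ∈ laurentLambda K q n := lambda_neg hK hy
    have h2 := hsub _ hmem2
    have heq : (-a) + (-(y - a)) = -y := by ring
    rw [heq] at h2
    exact h2
  have hcs : @ContinuousSMul K (LaurentSeries K) _ _ (laurentTop K) := by
    constructor
    rw [continuous_iff_continuousAt]
    rintro ⟨c₀, f₀⟩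
    rw [ContinuousAt, nhds_prod_eq]
    intro s hs
    obtain ⟨n, hn, hsub⟩ := (mem_nhds_iff_lambda hK).mp hs
    obtain ⟨a, ha0, haf⟩ := (isLattice_lambda hK hn).2 f₀
    obtain ⟨e, he⟩ := pow_unbounded_of_one_lt ‖c₀‖ (s0_hq1 hK)
    set n' : ℤ → WithBot ℤ := fun i => n i + ((e : ℤ) : WithBot ℤ) with hn'def
    have hn' : GoodSeq n' := by
      obtain ⟨k, hk⟩ := hn
      exact ⟨k, fun i hi => by simp [hn'def, hk i hi]⟩
    have hsubΛ : laurentLambda K q n' ⊆ laurentLambda K q n := by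
      intro f hf i
      have h := hf i
      cases hni : n i with
      | bot => trivial
      | coe j =>
        have hni' : n' i = ((j + e : ℤ) : WithBot ℤ) := by
          simp only [hn'def]
          rw [hni, ← WithBot.coe_add]
        rw [hni'] at h
        have h' : ‖f.coeff i‖ ≤ (q : ℝ) ^ (-(j + e)) := h
        show ‖f.coeff i‖ ≤ (q : ℝ) ^ (-j)
        refine le_trans h' ?_
        exact zpow_le_zpow_right₀ (s0_hq1 hK).le (by omega)
    have hc₀smul : ∀ w ∈ laurentLambda K q n', c₀ • w ∈ laurentLambda K q n := by
      intro w hw i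
      have h := hw i
      rw [HahnSeries.coeff_smul, smul_eq_mul]
      cases hni : n i with
      | bot => trivial
      | coe j =>
        have heq : n' i = ((j + e : ℤ) : WithBot ℤ) := by
          simp only [hn'def]
          rw [hni, ← WithBot.coe_add]
        rw [heq] at h
        show ‖c₀ * w.coeff i‖ ≤ (q : ℝ) ^ (-j)
        rw [norm_mul]
        have hb : ‖w.coeff i‖ ≤ (q : ℝ) ^ (-(j + e)) := h
        calc ‖c₀‖ * ‖w.coeff i‖ ≤ (q : ℝ) ^ e * (q : ℝ) ^ (-(j + e)) :=
              mul_le_mul he.le hb (norm_nonneg _) (by positivity)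
          _ = (q : ℝ) ^ ((e : ℤ)) * (q : ℝ) ^ (-(j + e)) := by rw [zpow_natCast]
          _ = (q : ℝ) ^ ((e : ℤ) + (-(j + e))) := by
              rw [← zpow_add₀ (ne_of_gt (s0_hq0 hK))]
          _ = (q : ℝ) ^ (-j) := by ring_nf
    have hδpos : 0 < min ‖a‖ 1 := lt_min (norm_pos_iff.mpr ha0) zero_lt_one
    rw [Filter.mem_map, Filter.mem_prod_iff]
    refine ⟨Metric.ball c₀ (min ‖a‖ 1), Metric.ball_mem_nhds _ hδpos,
      {f | f - f₀ ∈ laurentLambda K q n'}, sub_lambda_mem_nhds hK hn' f₀, ?_⟩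
    rintro ⟨c, f⟩ ⟨hc, hf⟩
    have hd : ‖c - c₀‖ < min ‖a‖ 1 := by
      rw [Metric.mem_ball, dist_eq_norm] at hc
      exact hc
    have hd1 : ‖c - c₀‖ ≤ 1 := le_of_lt (lt_of_lt_of_le hd (min_le_right _ _))
    have hda : ‖c - c₀‖ ≤ ‖a‖ := le_of_lt (lt_of_lt_of_le hd (min_le_left _ _))
    have h1 : c₀ • (f - f₀) ∈ laurentLambda K q n := hc₀smul _ hf
    have h2 : (c - c₀) • f₀ ∈ laurentLambda K q n := by
      have heq : (c - c₀) • f₀ = ((c - c₀) * a⁻¹) • (a • f₀) := by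
        rw [smul_smul, mul_assoc, inv_mul_cancel₀ ha0, mul_one]
      rw [heq]
      refine lambda_smul ?_ haf
      rw [norm_mul, norm_inv]
      rw [mul_inv_le_iff₀ (norm_pos_iff.mpr ha0), one_mul]
      exact hda
    have h3 : (c - c₀) • (f - f₀) ∈ laurentLambda K q n :=
      lambda_smul hd1 (hsubΛ hf)
    have hmem2 : c₀ • (f - f₀) + (c - c₀) • f₀ + (c - c₀) • (f - f₀)
        ∈ laurentLambda K q n := lambda_add hK (lambda_add hK h1 h2) h3
    have h4 := hsub _ hmem2
    have heq : c₀ • f₀ + (c₀ • (f - f₀) + (c - c₀) • f₀ + (c - c₀) • (f - f₀)) = c • f := by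
      module
    rw [heq] at h4
    exact h4
  refine ⟨⟨{ toContinuousAdd := hca, toContinuousNeg := hcn }, hcs, ?_⟩,
    fun n hn => isLattice_lambda hK hn, hmem⟩
  intro S hS
  obtain ⟨n, hn, hsub⟩ := (hmem S).mp hS
  refine ⟨laurentLambda K q n, isLattice_lambda hK hn, ?_, hsub⟩
  exact (hmem _).mpr ⟨n, hn, subset_rfl⟩


end TwoDimLF
end
end

section
/- Let B = Σ_{i∈ℤ} 𝔭^{k_i} t^i be a basic bounded 𝒪-submodule of K{{t}}, where (k_i)_{i∈ℤ} ⊂ ℤ ∪ {∞} is bounded below. Then B is compactoid for the higher topology if and only if k_i → ∞ as i → -∞. -/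
/-!
Common setting: `K` is a characteristic-zero local field (a finite extension of `ℚ_p`)
with ring of integers `𝒪 = {c : K | ‖c‖ ≤ 1}`, maximal ideal `𝔭 = {c : K | ‖c‖ < 1}`,
residue field of cardinality `q` and the absolute value normalised by `‖π‖ = q⁻¹`.
We formalise the two-dimensional local fields `K((t))` (as `LaurentSeries K`) and
`K{{t}}` (as the submodule `mixedCarrier K` of `ℤ → K`), their higher topologies, and
the relevant functional-analytic notions (lattices, seminorms, boundedness,
c-compactness, compactoidness, completeness for nets, duality).
-/

open Filter Topology Set Pointwise
open scoped Classical

noncomputable section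

namespace TwoDimLF

variable (K : Type) [NontriviallyNormedField K]

/-! ### Auxiliary lemmas for Statement 15 -/

section Aux15

variable {K}

/-- Evaluation of the `i`-th coefficient, as a linear map. -/
def evL (i : ℤ) : Mt K →ₗ[K] K :=
  (LinearMap.proj i).comp (Submodule.subtype (mixedCarrier K))

@[simp] lemma evL_apply (i : ℤ) (f : Mt K) : evL i f = f.1 i := rfl

lemma aux_norm_sum_le {ι : Type} (hna : ∀ x y : K, ‖x + y‖ ≤ max ‖x‖ ‖y‖)
    (s : Finset ι) (f : ι → K) {ε : ℝ} (hε : 0 ≤ ε) (h : ∀ j ∈ s, ‖f j‖ ≤ ε) :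
    ‖∑ j ∈ s, f j‖ ≤ ε := by
  classical
  induction s using Finset.induction_on with
  | empty => simpa using hε
  | @insert a s' ha ih =>
    rw [Finset.sum_insert ha]
    refine (hna _ _).trans (max_le (h a (Finset.mem_insert_self _ _)) ?_)
    exact ih fun j hj => h j (Finset.mem_insert_of_mem hj)

lemma aux_mem_pT {q : ℕ} (hq : 1 < (q : ℝ)) {n : WithTop ℤ} {m : ℤ}
    (hmn : (m : WithTop ℤ) ≤ n) {x : K} (hx : x ∈ pT K q n) :
    ‖x‖ ≤ (q : ℝ) ^ (-m) := by
  have hq0 : (0:ℝ) < q := lt_trans one_pos hq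
  induction n using WithTop.recTopCoe with
  | top =>
    have hx0 : x = 0 := hx
    rw [hx0, norm_zero]
    positivity
  | coe a =>
    have ha : m ≤ a := by exact_mod_cast hmn
    have hx' : ‖x‖ ≤ (q : ℝ) ^ (-a) := hx
    exact hx'.trans (zpow_le_zpow_right₀ hq.le (by omega))

lemma aux_zero_mem_pT {q : ℕ} (hq : 0 < (q : ℝ)) (n : WithTop ℤ) :
    (0 : K) ∈ pT K q n := by
  induction n using WithTop.recTopCoe with
  | top => exact rfl
  | coe a =>
    show ‖(0:K)‖ ≤ (q : ℝ) ^ (-a)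
    rw [norm_zero]
    positivity

lemma aux_ball_open {q : ℕ} (hq : 1 < (q : ℝ))
    (hv : ∀ x : K, x ≠ 0 → ∃ n : ℤ, ‖x‖ = (q : ℝ) ^ (-n)) (n : ℤ) :
    IsOpen {x : K | ‖x‖ ≤ (q : ℝ) ^ (-n)} := by
  have hq0 : (0:ℝ) < q := lt_trans one_pos hq
  have hset : {x : K | ‖x‖ ≤ (q : ℝ) ^ (-n)} = {x : K | ‖x‖ < (q : ℝ) ^ (-(n - 1))} := by
    ext x
    constructor
    · intro hx
      exact lt_of_le_of_lt hx (zpow_lt_zpow_right₀ hq (by omega))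
    · intro hx
      rcases eq_or_ne x 0 with rfl | hx0
      · show ‖(0:K)‖ ≤ _
        rw [norm_zero]; positivity
      · obtain ⟨a, ha⟩ := hv x hx0
        have h1 : (q : ℝ) ^ (-a) < (q : ℝ) ^ (-(n - 1)) := by
          rw [← ha]; exact hx
        have h2 : -a < -(n - 1) := by
          by_contra hcon
          exact absurd h1 (not_lt.2 (zpow_le_zpow_right₀ hq.le (not_lt.1 hcon)))
        show ‖x‖ ≤ _
        rw [ha]
        exact zpow_le_zpow_right₀ hq.le (by omega)
  rw [hset]
  exact isOpen_lt continuous_norm continuous_const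

lemma aux_univ_basic (q : ℕ) : (Set.univ : Set (Mt K)) ∈ mixedBasic K q := by
  refine ⟨fun _ => Set.univ, fun i => ⟨isOpen_univ, trivial⟩, ⟨0, fun i => Set.subset_univ _⟩,
    fun l => ⟨0, fun i _ => Set.subset_univ _⟩, ?_⟩
  ext f; simp

lemma aux_basic_inter {q : ℕ} (hq : 1 ≤ (q : ℝ)) {U V : Set (Mt K)}
    (hU : U ∈ mixedBasic K q) (hV : V ∈ mixedBasic K q) : U ∩ V ∈ mixedBasic K q := by
  obtain ⟨Us, hUs, ⟨c1, hc1⟩, hUl, rfl⟩ := hU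
  obtain ⟨Ws, hWs, ⟨c2, hc2⟩, hWl, rfl⟩ := hV
  refine ⟨fun i => Us i ∩ Ws i,
    fun i => ⟨(hUs i).1.inter (hWs i).1, (hUs i).2, (hWs i).2⟩, ⟨max c1 c2, fun i => ?_⟩,
    fun l => ?_, ?_⟩
  · intro x hx
    have hx' : ‖x‖ ≤ (q : ℝ) ^ (-(max c1 c2)) := hx
    constructor
    · exact hc1 i (hx'.trans (zpow_le_zpow_right₀ hq (by omega)))
    · exact hc2 i (hx'.trans (zpow_le_zpow_right₀ hq (by omega)))
  · obtain ⟨a1, ha1⟩ := hUl l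
    obtain ⟨a2, ha2⟩ := hWl l
    exact ⟨max a1 a2, fun i hi =>
      Set.subset_inter (ha1 i (le_trans (le_max_left _ _) hi))
        (ha2 i (le_trans (le_max_right _ _) hi))⟩
  · ext f
    simp only [Set.mem_setOf_eq, Set.mem_inter_iff, Set.mem_setOf_eq]
    exact forall_and.symm

lemma aux_open_subset_basic {q : ℕ} (hq : 1 ≤ (q : ℝ)) {Λ : Set (Mt K)}
    (h0 : (0 : Mt K) ∈ Λ) (hopen : IsOpen[mixedTop K q] Λ) :
    ∃ U ∈ mixedBasic K q, U ⊆ Λ := by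
  have h : Λ ∈ Filter.map (fun v : Mt K => (0 : Mt K) + v)
      (⨅ U ∈ mixedBasic K q, Filter.principal U) := hopen 0 h0
  rw [Filter.mem_map] at h
  have hpre : (fun v : Mt K => (0 : Mt K) + v) ⁻¹' Λ = Λ := by
    ext v; simp
  rw [hpre] at h
  have hdir : DirectedOn ((fun U : Set (Mt K) => (Filter.principal U)) ⁻¹'o (· ≥ ·))
      (mixedBasic K q) := by
    intro U hU V hV
    refine ⟨U ∩ V, aux_basic_inter hq hU hV, ?_, ?_⟩
    · exact Filter.principal_mono.2 Set.inter_subset_left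
    · exact Filter.principal_mono.2 Set.inter_subset_right
  rw [Filter.mem_biInf_of_directed hdir ⟨Set.univ, aux_univ_basic q⟩] at h
  obtain ⟨U, hU, hUΛ⟩ := h
  exact ⟨U, hU, hUΛ⟩

lemma aux_basic_isOpen {q : ℕ} {Λ : Set (Mt K)} (hΛ : Λ ∈ mixedBasic K q)
    (hadd : ∀ a ∈ Λ, ∀ v ∈ Λ, a + v ∈ Λ) : IsOpen[mixedTop K q] Λ := by
  show ∀ a ∈ Λ, Λ ∈ Filter.map (fun v : Mt K => a + v)
      (⨅ U ∈ mixedBasic K q, Filter.principal U)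
  intro a ha
  rw [Filter.mem_map]
  refine Filter.mem_of_superset
    (Filter.mem_iInf_of_mem Λ (Filter.mem_iInf_of_mem hΛ (Filter.mem_principal_self Λ)))
    fun v hv => hadd a ha v hv

end Aux15

/-- Let `B = Σ_{i∈ℤ} 𝔭^{k_i} t^i` be a basic bounded `𝒪`-submodule of
`K{{t}}`, where `(k_i) ⊆ ℤ ∪ {∞}` is bounded below. Then `B` is compactoid for the higher
topology if and only if `k_i → ∞` as `i → -∞`. -/
theorem statement15 (q : ℕ) (hK : IsCharZeroLocalField K q)
    (k : ℤ → WithTop ℤ) (hk : ∃ d : ℤ, ∀ i : ℤ, (d : WithTop ℤ) ≤ k i) :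
    IsCompactoid K (mixedTop K q) (mixedPT K q k) ↔
      ∀ m : ℤ, ∃ i0 : ℤ, ∀ i : ℤ, i ≤ i0 → (m : WithTop ℤ) ≤ k i := by
  have hq1 : (1:ℝ) < q := by exact_mod_cast hK.one_lt_q
  have hq0 : (0:ℝ) < q := lt_trans one_pos hq1
  obtain ⟨π, hπ⟩ := hK.exists_uniformizer
  have hπ0 : π ≠ 0 := by
    intro h
    rw [h, norm_zero] at hπ
    have : (0:ℝ) < (q:ℝ)⁻¹ := by positivity
    rw [← hπ] at this
    exact lt_irrefl 0 this
  have hπn : ∀ a : ℤ, ‖π ^ a‖ = (q:ℝ) ^ (-a) := by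
    intro a
    rw [norm_zpow, hπ, inv_zpow, ← zpow_neg]
  constructor
  · -- compactoid → tail condition
    intro hcomp m
    by_contra hcon
    push_neg at hcon
    set Λ : Set (Mt K) := {f : Mt K | ∀ i : ℤ, ‖f.1 i‖ ≤ (q:ℝ) ^ (-(m - max i 0))} with hΛdef
    have hΛbasic : Λ ∈ mixedBasic K q := by
      refine ⟨fun i => {x : K | ‖x‖ ≤ (q:ℝ) ^ (-(m - max i 0))},
        fun i => ⟨aux_ball_open hq1 hK.norm_values _, ?_⟩,
        ⟨m, fun i x hx => ?_⟩, fun l => ⟨max (m - l) 0, fun i hi x hx => ?_⟩, rfl⟩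
      · show ‖(0:K)‖ ≤ _
        rw [norm_zero]; positivity
      · exact le_trans hx (zpow_le_zpow_right₀ hq1.le (by omega))
      · exact le_trans hx (zpow_le_zpow_right₀ hq1.le (by omega))
    have hΛadd : ∀ a ∈ Λ, ∀ v ∈ Λ, a + v ∈ Λ := by
      intro a ha v hv i
      have h : (↑(a + v) : ℤ → K) i = a.1 i + v.1 i := rfl
      calc ‖(↑(a + v) : ℤ → K) i‖ = ‖a.1 i + v.1 i‖ := by rw [h]
        _ ≤ max ‖a.1 i‖ ‖v.1 i‖ := hK.nonarch _ _
        _ ≤ _ := max_le (ha i) (hv i)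
    have hΛopen : IsOpen[mixedTop K q] Λ := aux_basic_isOpen hΛbasic hΛadd
    have hΛlat : IsLatticeSet K Λ := by
      refine ⟨⟨fun i => ?_, hΛadd, fun s hs x hx i => ?_⟩, fun v => ?_⟩
      · show ‖(0:K)‖ ≤ _
        rw [norm_zero]; positivity
      · have h : (↑(s • x) : ℤ → K) i = s * x.1 i := rfl
        rw [h, norm_mul]
        calc ‖s‖ * ‖x.1 i‖ ≤ 1 * ((q:ℝ) ^ (-(m - max i 0))) :=
              mul_le_mul hs (hx i) (norm_nonneg _) one_pos.le
          _ = _ := one_mul _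
      · obtain ⟨C, hC⟩ := v.2.1
        have hC'0 : (0:ℝ) < max C 1 := lt_of_lt_of_le one_pos (le_max_right _ _)
        have hqi1 : (q:ℝ)⁻¹ < 1 := inv_lt_one_of_one_lt₀ hq1
        obtain ⟨e, he⟩ := exists_pow_lt_of_lt_one
          (show (0:ℝ) < (q:ℝ) ^ (-m) / max C 1 by positivity) hqi1
        refine ⟨π ^ e, pow_ne_zero _ hπ0, fun i => ?_⟩
        have h : (↑((π ^ e) • v) : ℤ → K) i = π ^ e * v.1 i := rfl
        rw [h, norm_mul, norm_pow, hπ]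
        have h1 : ((q:ℝ)⁻¹) ^ e * ‖v.1 i‖ ≤ ((q:ℝ)⁻¹) ^ e * max C 1 :=
          mul_le_mul_of_nonneg_left ((hC i).trans (le_max_left _ _)) (by positivity)
        have h2 : ((q:ℝ)⁻¹) ^ e * max C 1 ≤ ((q:ℝ) ^ (-m) / max C 1) * max C 1 :=
          mul_le_mul_of_nonneg_right he.le hC'0.le
        have h3 : ((q:ℝ) ^ (-m) / max C 1) * max C 1 = (q:ℝ) ^ (-m) :=
          div_mul_cancel₀ _ (ne_of_gt hC'0)
        refine (h1.trans (h2.trans_eq h3)).trans (zpow_le_zpow_right₀ hq1.le (by omega))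
    obtain ⟨m', v, hsub⟩ := hcomp Λ hΛlat hΛopen
    have hsmall : ∀ j : Fin m', ∀ᶠ i in Filter.atBot, ‖(v j).1 i‖ < (q:ℝ) ^ (-m) := by
      intro j
      have ht := (v j).2.2
      rw [Metric.tendsto_nhds] at ht
      have := ht _ (show (0:ℝ) < (q:ℝ) ^ (-m) by positivity)
      simpa [dist_zero_right] using this
    have hev : ∀ᶠ i in Filter.atBot,
        (i ≤ -1 ∧ ∀ j : Fin m', ‖(v j).1 i‖ < (q:ℝ) ^ (-m)) :=
      (Filter.eventually_le_atBot (-1)).and (Filter.eventually_all.2 hsmall)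
    obtain ⟨I, hI⟩ := Filter.eventually_atBot.1 hev
    obtain ⟨i, hiI, hki⟩ := hcon I
    have hlt : k i < (m : WithTop ℤ) := hki
    obtain ⟨a, hka, ham'⟩ := WithTop.lt_iff_exists_coe.1 hlt
    have ham : a < m := by exact_mod_cast ham'
    set x : Mt K := (π ^ a : K) • mixedT K i with hxdef
    have hxB : x ∈ mixedPT K q k := by
      intro i'
      have hxi' : x.1 i' = π ^ a * (if i' = i then 1 else 0) := rfl
      by_cases h' : i' = i
      · subst h'
        rw [hka]
        show ‖x.1 i'‖ ≤ (q:ℝ) ^ (-a)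
        rw [hxi', if_pos rfl, mul_one, hπn]
      · have : x.1 i' = 0 := by rw [hxi', if_neg h', mul_zero]
        rw [this]
        exact aux_zero_mem_pT hq0 _
    obtain ⟨l, hlΛ, cf, hcf, heq⟩ := hsub hxB
    have hxi : x.1 i = π ^ a := by
      have : x.1 i = π ^ a * (if i = i then 1 else 0) := rfl
      rw [this, if_pos rfl, mul_one]
    have hco : π ^ a = l.1 i + ∑ j, cf j * (v j).1 i := by
      have h := congrArg (fun z : Mt K => evL (K := K) i z) heq
      simp only [map_add, map_sum, map_smul, smul_eq_mul, evL_apply] at h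
      rw [← hxi]; exact h
    obtain ⟨hile, hvsmall⟩ := hI i hiI
    have h1 : ‖l.1 i‖ ≤ (q:ℝ) ^ (-m) := by
      have h := hlΛ i
      have hmax : max i 0 = 0 := by omega
      rw [hmax, sub_zero] at h
      exact h
    have h2 : ‖∑ j, cf j * (v j).1 i‖ ≤ (q:ℝ) ^ (-m) := by
      refine aux_norm_sum_le hK.nonarch _ _ (by positivity) fun j _ => ?_
      rw [norm_mul]
      calc ‖cf j‖ * ‖(v j).1 i‖ ≤ 1 * ((q:ℝ) ^ (-m)) :=
            mul_le_mul (hcf j) (hvsmall j).le (norm_nonneg _) one_pos.le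
        _ = _ := one_mul _
    have h3 : ‖(π : K) ^ a‖ ≤ (q:ℝ) ^ (-m) := by
      rw [hco]
      exact (hK.nonarch _ _).trans (max_le h1 h2)
    rw [hπn a] at h3
    have h4 : (q:ℝ) ^ (-m) < (q:ℝ) ^ (-a) := zpow_lt_zpow_right₀ hq1 (by omega)
    linarith
  · -- tail condition → compactoid
    intro htail Λ hΛlat hΛopen
    obtain ⟨⟨h0Λ, _, _⟩, _⟩ := hΛlat
    obtain ⟨d, hd⟩ := hk
    obtain ⟨U, hU, hUΛ⟩ := aux_open_subset_basic hq1.le h0Λ hΛopen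
    obtain ⟨Vs, hVs, ⟨c, hc⟩, hVl, rfl⟩ := hU
    obtain ⟨i1, hi1⟩ := hVl d
    obtain ⟨i0', hi0⟩ := htail c
    set lo : ℤ := min i0' (i1 - 1) with hlodef
    have hlo1 : lo ≤ i1 - 1 := min_le_right _ _
    have hlo0 : lo ≤ i0' := min_le_left _ _
    set mm : ℕ := (i1 - lo - 1).toNat with hmmdef
    refine ⟨mm, fun j => (π ^ d : K) • mixedT K (lo + 1 + (j:ℤ)), ?_⟩
    intro x hx
    refine ⟨x - ∑ j : Fin mm, (x.1 (lo + 1 + (j:ℤ)) * π ^ (-d)) •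
        ((π ^ d : K) • mixedT K (lo + 1 + (j:ℤ))), ?_,
      fun j => x.1 (lo + 1 + (j:ℤ)) * π ^ (-d), fun j => ?_, (sub_add_cancel _ _).symm⟩
    · -- l ∈ Λ
      refine hUΛ fun i => ?_
      have hline : ((x - ∑ j : Fin mm, (x.1 (lo + 1 + (j:ℤ)) * π ^ (-d)) •
          ((π ^ d : K) • mixedT K (lo + 1 + (j:ℤ)))) : Mt K).1 i
          = x.1 i - ∑ j : Fin mm,
            (if i = lo + 1 + (j:ℤ) then x.1 (lo + 1 + (j:ℤ)) * π ^ (-d) * π ^ d else 0) := by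
        have h := map_sub (evL (K := K) i) x (∑ j : Fin mm,
          (x.1 (lo + 1 + (j:ℤ)) * π ^ (-d)) • ((π ^ d : K) • mixedT K (lo + 1 + (j:ℤ))))
        rw [map_sum] at h
        rw [show ((x - ∑ j : Fin mm, (x.1 (lo + 1 + (j:ℤ)) * π ^ (-d)) •
            ((π ^ d : K) • mixedT K (lo + 1 + (j:ℤ)))) : Mt K).1 i
            = evL (K := K) i (x - ∑ j : Fin mm, (x.1 (lo + 1 + (j:ℤ)) * π ^ (-d)) •
            ((π ^ d : K) • mixedT K (lo + 1 + (j:ℤ)))) from rfl, h]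
        congr 1
        refine Finset.sum_congr rfl fun j _ => ?_
        rw [map_smul, map_smul, smul_eq_mul, smul_eq_mul, evL_apply]
        show x.1 (lo + 1 + (j:ℤ)) * π ^ (-d) * (π ^ d * (if i = lo + 1 + (j:ℤ) then 1 else 0)) = _
        by_cases h' : i = lo + 1 + (j:ℤ)
        · rw [if_pos h', if_pos h', mul_one, mul_assoc]
        · rw [if_neg h', if_neg h', mul_zero, mul_zero]
      rw [hline]
      by_cases hcase1 : i ≤ lo
      · rw [Finset.sum_eq_zero fun j _ => by
          rw [if_neg]; omega, sub_zero]
        exact hc i (aux_mem_pT hq1 (hi0 i (le_trans hcase1 hlo0)) (hx i))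
      · by_cases hcase2 : i1 ≤ i
        · rw [Finset.sum_eq_zero fun j _ => by
            rw [if_neg]
            have hj : (j:ℕ) < mm := j.2
            omega, sub_zero]
          exact hi1 i hcase2 (aux_mem_pT hq1 (hd i) (hx i))
        · -- middle: lo < i < i1
          push_neg at hcase1 hcase2
          have hj0lt : (i - lo - 1).toNat < mm := by omega
          set j0 : Fin mm := ⟨(i - lo - 1).toNat, hj0lt⟩ with hj0def
          have hij0 : i = lo + 1 + ((j0:ℕ):ℤ) := by
            show i = lo + 1 + ((i - lo - 1).toNat : ℤ)
            omega
          rw [Finset.sum_eq_single j0 (fun b _ hb => by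
              rw [if_neg]
              intro h'
              refine hb (Fin.ext ?_)
              show (b:ℕ) = (i - lo - 1).toNat
              omega)
            (fun h => absurd (Finset.mem_univ _) h)]
          rw [if_pos hij0, ← hij0, mul_assoc, zpow_neg,
            inv_mul_cancel₀ (zpow_ne_zero _ hπ0), mul_one, sub_self]
          exact (hVs i).2
    · -- ‖cf j‖ ≤ 1
      have hxd : ‖x.1 (lo + 1 + (j:ℤ))‖ ≤ (q:ℝ) ^ (-d) :=
        aux_mem_pT hq1 (hd _) (hx _)
      rw [norm_mul, hπn]
      calc ‖x.1 (lo + 1 + (j:ℤ))‖ * (q:ℝ) ^ (-(-d))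
          ≤ (q:ℝ) ^ (-d) * (q:ℝ) ^ (-(-d)) :=
            mul_le_mul_of_nonneg_right hxd (by positivity)
        _ = 1 := by rw [← zpow_add₀ (ne_of_gt hq0)]; simp

end TwoDimLF
end
end

section
/- Let F = K((t)) or F = K{{t}} with the higher topology, let w: F → K be a continuous K-linear form, and set a_i = w(t^{-i}) for each i ∈ ℤ. Then the formal sum Σ_{i∈ℤ} a_i t^i defines an element of F; that is, if F = K((t)) then a_i = 0 for all sufficiently small i, and if F = K{{t}} then the values |a_i| are bounded and a_i → 0 as i → -∞. -/
/-!
Common setting: `K` is a characteristic-zero local field (a finite extension of `ℚ_p`)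
with ring of integers `𝒪 = {c : K | ‖c‖ ≤ 1}`, maximal ideal `𝔭 = {c : K | ‖c‖ < 1}`,
residue field of cardinality `q` and the absolute value normalised by `‖π‖ = q⁻¹`.
We formalise the two-dimensional local fields `K((t))` (as `LaurentSeries K`) and
`K{{t}}` (as the submodule `mixedCarrier K` of `ℤ → K`), their higher topologies, and
the relevant functional-analytic notions (lattices, seminorms, boundedness,
c-compactness, compactoidness, completeness for nets, duality).
-/

open Filter Topology Set Pointwise
open scoped Classical

noncomputable section

namespace TwoDimLF

variable (K : Type) [NontriviallyNormedField K]

private lemma exists_basic_subset {W : Type} [AddCommGroup W] {B : Set (Set W)}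
    (hdir : ∀ S1 ∈ B, ∀ S2 ∈ B, ∃ S3 ∈ B, S3 ⊆ S1 ∧ S3 ⊆ S2) (hne : B.Nonempty)
    {U : Set W} (hU : IsOpen[addTopologyOf B] U) (h0 : (0:W) ∈ U) :
    ∃ S ∈ B, S ⊆ U := by
  have h1 : U ∈ Filter.map (fun v => (0:W) + v) (⨅ S ∈ B, Filter.principal S) := hU 0 h0
  rw [Filter.mem_map] at h1
  have hpre : (fun v => (0:W) + v) ⁻¹' U = U := by ext v; simp
  rw [hpre] at h1
  rw [Filter.mem_biInf_of_directed ?_ hne] at h1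
  · obtain ⟨S, hS, hSU⟩ := h1
    exact ⟨S, hS, hSU⟩
  · rintro S1 hS1 S2 hS2
    obtain ⟨S3, h3, h31, h32⟩ := hdir S1 hS1 S2 hS2
    exact ⟨S3, h3, Filter.principal_mono.2 h31, Filter.principal_mono.2 h32⟩

/-- Let `F = K((t))` or `F = K{{t}}` with the higher topology, let
`w : F → K` be a continuous `K`-linear form and set `a_i = w(t^{-i})`. Then `Σ a_i t^i`
defines an element of `F`: for `K((t))`, `a_i = 0` for all sufficiently small `i`; for
`K{{t}}`, the values `‖a_i‖` are bounded and `a_i → 0` as `i → -∞`. -/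
theorem statement18 (q : ℕ) (hK : IsCharZeroLocalField K q) :
    (∀ w : LaurentSeries K → K, IsLinearMap K w → @Continuous _ _ (laurentTop K) _ w →
      ∃ i0 : ℤ, ∀ i : ℤ, i ≤ i0 → w (HahnSeries.single (-i) (1 : K)) = 0) ∧
    (∀ w : Mt K → K, IsLinearMap K w → @Continuous _ _ (mixedTop K q) _ w →
      (∃ C : ℝ, ∀ i : ℤ, ‖w (mixedT K (-i))‖ ≤ C) ∧
      Filter.Tendsto (fun i : ℤ => w (mixedT K (-i))) Filter.atBot (nhds (0 : K))) := by
  have hq : (1:ℝ) < q := by exact_mod_cast hK.one_lt_q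
  have hqpos : (0:ℝ) < q := lt_trans one_pos hq
  obtain ⟨π, hπ⟩ := hK.exists_uniformizer
  have hπpos : 0 < ‖π‖ := by rw [hπ]; positivity
  have hπne : π ≠ 0 := by
    intro h; rw [h, norm_zero] at hπpos; exact lt_irrefl _ hπpos
  have hball : IsOpen {x : K | ‖x‖ < 1} := isOpen_lt continuous_norm continuous_const
  constructor
  · -- equal characteristic case
    intro w hlin hcont
    have hUopen : IsOpen[laurentTop K] (w ⁻¹' {x : K | ‖x‖ < 1}) :=
      @Continuous.isOpen_preimage _ _ (laurentTop K) _ w hcont _ hball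
    have h0 : (0 : LaurentSeries K) ∈ w ⁻¹' {x : K | ‖x‖ < 1} := by
      simp [Set.mem_preimage, hlin.map_zero]
    have hdirL : ∀ S1 ∈ laurentBasic K, ∀ S2 ∈ laurentBasic K,
        ∃ S3 ∈ laurentBasic K, S3 ⊆ S1 ∧ S3 ⊆ S2 := by
      rintro S1 ⟨U1, hU1, ⟨N1, hN1⟩, rfl⟩ S2 ⟨U2, hU2, ⟨N2, hN2⟩, rfl⟩
      refine ⟨{f : LaurentSeries K | ∀ i, f.coeff i ∈ U1 i ∩ U2 i},
        ⟨fun i => U1 i ∩ U2 i,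
          fun i => ⟨(hU1 i).1.inter (hU2 i).1, (hU1 i).2, (hU2 i).2⟩,
          ⟨max N1 N2, fun i hi => by
            simp [hN1 i (le_trans (le_max_left _ _) hi),
              hN2 i (le_trans (le_max_right _ _) hi)]⟩, rfl⟩,
        fun f hf i => (hf i).1, fun f hf i => (hf i).2⟩
    have hneL : (laurentBasic K).Nonempty :=
      ⟨{f : LaurentSeries K | ∀ i, f.coeff i ∈ Set.univ},
        ⟨fun _ => Set.univ, fun i => ⟨isOpen_univ, Set.mem_univ 0⟩, ⟨0, fun _ _ => rfl⟩, rfl⟩⟩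
    obtain ⟨S, hSB, hSU⟩ := exists_basic_subset hdirL hneL hUopen h0
    obtain ⟨U, hUprop, ⟨N, hN⟩, rfl⟩ := hSB
    refine ⟨-N, fun i hi => ?_⟩
    by_contra ha
    obtain ⟨c, hc⟩ := NormedField.exists_lt_norm K (‖w (HahnSeries.single (-i) (1:K))‖⁻¹)
    have hmem : (c • HahnSeries.single (-i) (1:K)) ∈
        {f : LaurentSeries K | ∀ j, f.coeff j ∈ U j} := by
      intro j
      have hco : (c • HahnSeries.single (-i) (1:K)).coeff j = if j = -i then c else 0 := by
        show c * (HahnSeries.single (-i) (1:K)).coeff j = _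
        rw [HahnSeries.coeff_single]
        split <;> simp
      rw [hco]
      split
      · next h => rw [hN j (by omega)]; trivial
      · exact (hUprop j).2
    have hlt : ‖w (c • HahnSeries.single (-i) (1:K))‖ < 1 := hSU hmem
    rw [hlin.map_smul, smul_eq_mul, norm_mul] at hlt
    have hapos : 0 < ‖w (HahnSeries.single (-i) (1:K))‖ := norm_pos_iff.2 ha
    have h1lt : 1 < ‖c‖ * ‖w (HahnSeries.single (-i) (1:K))‖ := by
      have := mul_lt_mul_of_pos_right hc hapos
      rwa [inv_mul_cancel₀ (ne_of_gt hapos)] at this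
    linarith
  · -- mixed characteristic case
    intro w hlin hcont
    have hUopen : IsOpen[mixedTop K q] (w ⁻¹' {x : K | ‖x‖ < 1}) :=
      @Continuous.isOpen_preimage _ _ (mixedTop K q) _ w hcont _ hball
    have h0 : (0 : Mt K) ∈ w ⁻¹' {x : K | ‖x‖ < 1} := by
      simp [Set.mem_preimage, hlin.map_zero]
    have hdirM : ∀ S1 ∈ mixedBasic K q, ∀ S2 ∈ mixedBasic K q,
        ∃ S3 ∈ mixedBasic K q, S3 ⊆ S1 ∧ S3 ⊆ S2 := by
      rintro S1 ⟨V1, hV1, ⟨c1, hc1⟩, h31, rfl⟩ S2 ⟨V2, hV2, ⟨c2, hc2⟩, h32, rfl⟩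
      refine ⟨{f : Mt K | ∀ i, f.1 i ∈ V1 i ∩ V2 i},
        ⟨fun i => V1 i ∩ V2 i,
          fun i => ⟨(hV1 i).1.inter (hV2 i).1, (hV1 i).2, (hV2 i).2⟩,
          ⟨max c1 c2, fun i x hx => ?_⟩, fun l => ?_, rfl⟩,
        fun f hf i => (hf i).1, fun f hf i => (hf i).2⟩
      · have hle1 : (q:ℝ) ^ (-(max c1 c2)) ≤ (q:ℝ) ^ (-c1) :=
          zpow_le_zpow_right₀ hq.le (by omega)
        have hle2 : (q:ℝ) ^ (-(max c1 c2)) ≤ (q:ℝ) ^ (-c2) :=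
          zpow_le_zpow_right₀ hq.le (by omega)
        exact ⟨hc1 i (le_trans hx hle1), hc2 i (le_trans hx hle2)⟩
      · obtain ⟨i1, hi1⟩ := h31 l
        obtain ⟨i2, hi2⟩ := h32 l
        refine ⟨max i1 i2, fun i hi x hx => ?_⟩
        exact ⟨hi1 i (le_trans (le_max_left _ _) hi) hx,
          hi2 i (le_trans (le_max_right _ _) hi) hx⟩
    have hneM : (mixedBasic K q).Nonempty :=
      ⟨{f : Mt K | ∀ i, f.1 i ∈ Set.univ},
        ⟨fun _ => Set.univ, fun i => ⟨isOpen_univ, Set.mem_univ 0⟩,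
          ⟨0, fun i => Set.subset_univ _⟩, fun l => ⟨0, fun i _ => Set.subset_univ _⟩, rfl⟩⟩
    obtain ⟨S, hSB, hSU⟩ := exists_basic_subset hdirM hneM hUopen h0
    obtain ⟨Vs, hVs, ⟨c, hc⟩, h3, rfl⟩ := hSB
    have key : ∀ (l i : ℤ), {x : K | ‖x‖ ≤ (q:ℝ) ^ (-l)} ⊆ Vs (-i) →
        ‖w (mixedT K (-i))‖ < (q:ℝ) ^ l := by
      intro l i hsub
      have hmem : (π ^ l • mixedT K (-i)) ∈ {f : Mt K | ∀ j, f.1 j ∈ Vs j} := by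
        intro j
        have hco : (π ^ l • mixedT K (-i)).1 j = π ^ l * (if j = -i then 1 else 0) := rfl
        rw [hco]
        split
        · next h =>
          rw [mul_one, h]
          apply hsub
          show ‖π ^ l‖ ≤ (q:ℝ) ^ (-l)
          rw [norm_zpow, hπ, inv_zpow, ← zpow_neg]
        · rw [mul_zero]; exact (hVs j).2
      have hlt : ‖w (π ^ l • mixedT K (-i))‖ < 1 := hSU hmem
      rw [hlin.map_smul, smul_eq_mul, norm_mul, norm_zpow, hπ, inv_zpow, ← zpow_neg] at hlt
      have hpow : (0:ℝ) < (q:ℝ) ^ l := zpow_pos hqpos l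
      calc ‖w (mixedT K (-i))‖
          = (q:ℝ) ^ l * ((q:ℝ) ^ (-l) * ‖w (mixedT K (-i))‖) := by
            rw [← mul_assoc, ← zpow_add₀ (ne_of_gt hqpos)]
            simp
        _ < (q:ℝ) ^ l * 1 := mul_lt_mul_of_pos_left hlt hpow
        _ = (q:ℝ) ^ l := mul_one _
    constructor
    · exact ⟨(q:ℝ) ^ c, fun i => (key c i (hc (-i))).le⟩
    · rw [NormedAddCommGroup.tendsto_nhds_zero]
      intro ε hε
      obtain ⟨n, hn⟩ := exists_pow_lt_of_lt_one hε (by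
        rw [inv_lt_one_iff₀]; right; exact hq : ((q:ℝ))⁻¹ < 1)
      have hql : (q:ℝ) ^ (-(n:ℤ)) < ε := by
        rw [zpow_neg, zpow_natCast, ← inv_pow]
        exact hn
      obtain ⟨i0, hi0⟩ := h3 (-(n:ℤ))
      filter_upwards [Filter.eventually_le_atBot (-i0)] with i hi
      have hkey := key (-(n:ℤ)) i (by
        have : i0 ≤ -i := by omega
        simpa using hi0 (-i) this)
      exact lt_trans hkey hql

end TwoDimLF
end
end
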